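/- Maximum principle below the principal eigenvalue: let 0 < γ < 2 and μ < λ̄'_γ(F). Suppose u : [0,1] → ℝ is continuous on [0,1], C² on (0,1), and satisfies F(D(u''(r), u'(r)/r)) + μ·u(r)·r^{−γ} ≥ 0 for all r ∈ (0,1). If u(1) ≤ 0, then u(r) ≤ 0 for all r ∈ [0,1]. -/

import Mathlib

open Set Real Filter MeasureTheory Matrix
open Topology

noncomputable section

/-- The `N × N` diagonal matrix with first diagonal entry `a` and the remaining
`N - 1` diagonal entries equal to `b`. -/
def Dmat (N : ℕ) (a b : ℝ) : Matrix (Fin N) (Fin N) ℝ :=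
  Matrix.diagonal (fun i => if (i : ℕ) = 0 then a else b)

/-- Uniform ellipticity with constants `0 < lam ≤ Lam`. -/
def UnifElliptic (N : ℕ) (lam Lam : ℝ) (F : Matrix (Fin N) (Fin N) ℝ → ℝ) : Prop :=
  ∀ M P : Matrix (Fin N) (Fin N) ℝ, M.IsSymm → P.PosSemidef →
    lam * P.trace ≤ F (M + P) - F M ∧ F (M + P) - F M ≤ Lam * P.trace

/-- Rotation invariance. -/
def RotInvariant (N : ℕ) (F : Matrix (Fin N) (Fin N) ℝ → ℝ) : Prop :=
  ∀ O M : Matrix (Fin N) (Fin N) ℝ, Oᵀ * O = 1 → F (Oᵀ * M * O) = F M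

/-- Positive one-homogeneity. -/
def PosHomog (N : ℕ) (F : Matrix (Fin N) (Fin N) ℝ → ℝ) : Prop :=
  ∀ t : ℝ, 0 < t → ∀ M : Matrix (Fin N) (Fin N) ℝ, F (t • M) = t * F M

/-- The radial principal eigenvalue `λ̄'_γ(F)` on the punctured unit ball. -/
def radialEV (N : ℕ) (F : Matrix (Fin N) (Fin N) ℝ → ℝ) (γ : ℝ) : ℝ :=
  sSup {μ : ℝ | ∃ u : ℝ → ℝ, ContDiffOn ℝ 2 u (Ioo 0 1) ∧
    (∀ r ∈ Ioo (0:ℝ) 1, 0 < u r) ∧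
    (∀ r ∈ Ioo (0:ℝ) 1,
      F (Dmat N (deriv (deriv u) r) (deriv u r / r)) + μ * u r * r ^ (-γ) ≤ 0)}

/- ### Auxiliary lemmas -/

lemma Dmat_add (N : ℕ) (a b s t : ℝ) : Dmat N a b + Dmat N s t = Dmat N (a+s) (b+t) := by
  simp only [Dmat, Matrix.diagonal_add]
  apply congrArg; funext i; by_cases h : (i:ℕ) = 0 <;> simp [h]

lemma Dmat_smul (N : ℕ) (c a b : ℝ) : c • Dmat N a b = Dmat N (c*a) (c*b) := by
  simp only [Dmat, ← Matrix.diagonal_smul]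
  apply congrArg; funext i; by_cases h : (i:ℕ) = 0 <;> simp [h]

lemma Dmat_isSymm (N : ℕ) (a b : ℝ) : (Dmat N a b).IsSymm := Matrix.isSymm_diagonal _

lemma Dmat_posSemidef (N : ℕ) (a b : ℝ) (ha : 0 ≤ a) (hb : 0 ≤ b) : (Dmat N a b).PosSemidef := by
  rw [Dmat, Matrix.posSemidef_diagonal_iff]
  intro i; by_cases h : (i:ℕ) = 0 <;> simp [h] <;> assumption

lemma Dmat_zero (N : ℕ) : Dmat N 0 0 = 0 := by
  simp [Dmat]

lemma Dmat_trace (N : ℕ) (hN : 1 ≤ N) (a b : ℝ) : (Dmat N a b).trace = a + ((N:ℝ)-1)*b := by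
  rw [Dmat, Matrix.trace_diagonal, Finset.sum_ite]
  have h1 : (Finset.univ.filter (fun i : Fin N => (i:ℕ) = 0)) = {⟨0, hN⟩} := by
    ext i; simp [Fin.ext_iff]
  have h2 : ((Finset.univ.filter (fun i : Fin N => ¬(i:ℕ) = 0))).card = N - 1 := by
    have := Finset.card_filter_add_card_filter_not
      (s := (Finset.univ : Finset (Fin N))) (p := fun i : Fin N => (i:ℕ) = 0)
    rw [h1] at this
    simp at this
    omega
  rw [h1, Finset.sum_const, Finset.sum_const, h2, Finset.card_singleton]
  have : ((N:ℝ) - 1) = ((N - 1 : ℕ) : ℝ) := by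
    push_cast [Nat.cast_sub hN]; ring
  rw [this]
  norm_num

lemma secondDerivTest {g : ℝ → ℝ} {x a b L : ℝ} (hx : x ∈ Ioo a b)
    (hd : ∀ y ∈ Ioo a b, DifferentiableAt ℝ g y)
    (hmax : ∀ y ∈ Ioo a b, g y ≤ g x)
    (hL : HasDerivAt (deriv g) L x) : L ≤ 0 := by
  by_contra hL0
  push_neg at hL0
  have hlm : IsLocalMax g x :=
    Filter.eventually_of_mem (isOpen_Ioo.mem_nhds hx) hmax
  have h0 : deriv g x = 0 := hlm.deriv_eq_zero
  have hslope : Tendsto (slope (deriv g) x) (𝓝[≠] x) (𝓝 L) :=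
    hasDerivAt_iff_tendsto_slope.mp hL
  have hslope' : Tendsto (slope (deriv g) x) (𝓝[>] x) (𝓝 L) :=
    hslope.mono_left (nhdsWithin_mono _ (fun y hy => ne_of_gt hy))
  have hev : ∀ᶠ z in 𝓝[>] x, 0 < slope (deriv g) x z :=
    hslope'.eventually (eventually_gt_nhds hL0)
  have hIoo : Ioo x b ∈ 𝓝[>] x := Ioo_mem_nhdsGT_of_mem ⟨le_refl x, hx.2⟩
  have hA : {z | 0 < slope (deriv g) x z} ∩ Ioo x b ∈ 𝓝[>] x :=
    Filter.inter_mem hev hIoo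
  obtain ⟨y, hy0, hsub⟩ := mem_nhdsGT_iff_exists_Ioo_subset.mp hA
  have hy : x < y := hy0
  have hderivpos : ∀ z ∈ Ioo x y, 0 < deriv g z := by
    intro z hz
    have h1 := (hsub hz).1
    have h2 := (hsub hz).2
    simp only [Set.mem_setOf_eq, slope_def_field, h0, sub_zero] at h1
    have hzx : 0 < z - x := sub_pos.mpr h2.1
    by_contra hc
    push_neg at hc
    nlinarith [div_nonpos_of_nonpos_of_nonneg hc hzx.le]
  set z₀ := (x + y)/2 with hz₀
  have hz₀mem : z₀ ∈ Ioo x y := ⟨by simp only [hz₀]; linarith [hy], by simp only [hz₀]; linarith [hy]⟩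
  have hz₀b : z₀ < b := (hsub hz₀mem).2.2
  have hxz : x < z₀ := hz₀mem.1
  have hcont : ContinuousOn g (Icc x z₀) := by
    intro w hw
    exact ((hd w ⟨lt_of_lt_of_le hx.1 hw.1, lt_of_le_of_lt hw.2 hz₀b⟩).continuousAt).continuousWithinAt
  have hdiff : DifferentiableOn ℝ g (Ioo x z₀) := by
    intro w hw
    exact (hd w ⟨lt_trans hx.1 hw.1, lt_trans hw.2 hz₀b⟩).differentiableWithinAt
  obtain ⟨ξ, hξ, hξeq⟩ := exists_deriv_eq_slope g hxz hcont hdiff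
  have hpos : 0 < deriv g ξ := hderivpos ξ ⟨hξ.1, lt_trans hξ.2 hz₀mem.2⟩
  have hle : g z₀ - g x ≤ 0 := sub_nonpos.mpr (hmax z₀ ⟨lt_trans hx.1 hxz, hz₀b⟩)
  rw [hξeq] at hpos
  have : (g z₀ - g x) / (z₀ - x) ≤ 0 := div_nonpos_of_nonpos_of_nonneg hle (by linarith)
  linarith

section Flemmas
variable {N : ℕ} {lam Lam : ℝ} {F : Matrix (Fin N) (Fin N) ℝ → ℝ}
  (hN : 1 ≤ N) (hF1 : UnifElliptic N lam Lam F) (hF3 : PosHomog N F)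

include hF3 in
lemma F_zero : F 0 = 0 := by
  have := hF3 2 two_pos 0
  simp at this
  linarith

include hF3 in
lemma F_smul {c : ℝ} (hc : 0 < c) (a b : ℝ) :
    F (Dmat N (c*a) (c*b)) = c * F (Dmat N a b) := by
  rw [← Dmat_smul, hF3 c hc]

include hN hF1 in
lemma F_pert (a b s t : ℝ) (hs : 0 ≤ s) (ht : 0 ≤ t) :
    lam*(s+((N:ℝ)-1)*t) ≤ F (Dmat N (a+s) (b+t)) - F (Dmat N a b) ∧
    F (Dmat N (a+s) (b+t)) - F (Dmat N a b) ≤ Lam*(s+((N:ℝ)-1)*t) := by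
  have := hF1 (Dmat N a b) (Dmat N s t) (Dmat_isSymm N a b) (Dmat_posSemidef N s t hs ht)
  rwa [Dmat_add, Dmat_trace N hN] at this

include hN hF1 in
lemma F_le_add (a b s t : ℝ) (hs : 0 ≤ s) (ht : t ≤ 0) :
    F (Dmat N (a+s) (b+t)) ≤ F (Dmat N a b) + Lam*s + lam*((N:ℝ)-1)*t := by
  have h1 := (F_pert hN hF1 a (b+t) s 0 hs le_rfl).2
  have h2 := (F_pert hN hF1 a (b+t) 0 (-t) le_rfl (by linarith)).1
  rw [add_zero] at h1
  rw [add_zero, add_neg_cancel_right] at h2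
  nlinarith [h1, h2]

include hN hF1 in
lemma F_lower_a (a b s : ℝ) (hs : 0 ≤ s) :
    F (Dmat N a b) + lam*s ≤ F (Dmat N (a+s) b) := by
  have := (F_pert hN hF1 a b s 0 hs le_rfl).1
  rw [add_zero] at this
  nlinarith [this]

end Flemmas

lemma c2_fst {f : ℝ → ℝ} {s : Set ℝ} (hf : ContDiffOn ℝ 2 f s) (hs : IsOpen s) :
    ∀ x ∈ s, HasDerivAt f (deriv f x) x := fun x hx =>
  ((hf.differentiableOn (by norm_num) x hx).differentiableAt (hs.mem_nhds hx)).hasDerivAt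

lemma c2_snd {f : ℝ → ℝ} {s : Set ℝ} (hf : ContDiffOn ℝ 2 f s) (hs : IsOpen s) :
    ∀ x ∈ s, HasDerivAt (deriv f) (deriv (deriv f) x) x := fun x hx =>
  (((hf.deriv_of_isOpen (m := 1) hs (by norm_num)).differentiableOn one_ne_zero x hx).differentiableAt
    (hs.mem_nhds hx)).hasDerivAt

set_option maxHeartbeats 1000000 in
theorem stmt13 (N : ℕ) (hN : 2 ≤ N) (lam Lam : ℝ) (hlam : 0 < lam) (hlL : lam ≤ Lam)
    (hNp : 2 < lam / Lam * ((N : ℝ) - 1) + 1)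
    (F : Matrix (Fin N) (Fin N) ℝ → ℝ)
    (hF1 : UnifElliptic N lam Lam F) (hF2 : RotInvariant N F) (hF3 : PosHomog N F)
    (γ : ℝ) (hγ0 : 0 < γ) (hγ2 : γ < 2)
    (μ : ℝ) (hμ : μ < radialEV N F γ)
    (u : ℝ → ℝ) (huc : ContinuousOn u (Icc 0 1)) (hu2 : ContDiffOn ℝ 2 u (Ioo 0 1))
    (hineq : ∀ r ∈ Ioo (0:ℝ) 1,
      0 ≤ F (Dmat N (deriv (deriv u) r) (deriv u r / r)) + μ * u r * r ^ (-γ))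
    (hbd : u 1 ≤ 0) :
    ∀ r ∈ Icc (0:ℝ) 1, u r ≤ 0 := by
  have hN1 : 1 ≤ N := le_trans one_le_two hN
  have hLam : 0 < Lam := lt_of_lt_of_le hlam hlL
  have hLamne : Lam ≠ 0 := ne_of_gt hLam
  have hNl : Lam < lam * ((N:ℝ)-1) := by
    have h1 : 1 < lam/Lam*((N:ℝ)-1) := by linarith
    have hdiv : lam/Lam*((N:ℝ)-1)*Lam = lam*((N:ℝ)-1) := by field_simp
    nlinarith [mul_pos (sub_pos.mpr h1) hLam]
  -- Step 1: extract a test function φ for some μ' > μ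
  have hμ' : ∃ μ' ∈ {m : ℝ | ∃ v : ℝ → ℝ, ContDiffOn ℝ 2 v (Ioo 0 1) ∧
      (∀ r ∈ Ioo (0:ℝ) 1, 0 < v r) ∧
      (∀ r ∈ Ioo (0:ℝ) 1,
        F (Dmat N (deriv (deriv v) r) (deriv v r / r)) + m * v r * r ^ (-γ) ≤ 0)}, μ < μ' := by
    apply exists_lt_of_lt_csSup
    · refine ⟨0, ⟨fun _ => (1:ℝ), contDiffOn_const, fun r _ => one_pos, fun r hr => ?_⟩⟩
      have hd1 : deriv (fun _ : ℝ => (1:ℝ)) = fun _ => (0:ℝ) := by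
        funext x; exact deriv_const x 1
      have hd2 : deriv (deriv (fun _ : ℝ => (1:ℝ))) = fun _ => (0:ℝ) := by
        rw [hd1]; funext x; exact deriv_const x 0
      rw [hd2, hd1]
      simp only [zero_div, Dmat_zero, F_zero hF3]
      norm_num
    · exact hμ
  obtain ⟨μ', hμ'mem, hμμ'⟩ := hμ'
  obtain ⟨φ, hφ2, hφpos, hφineq⟩ := hμ'mem
  have hφd1 := c2_fst hφ2 isOpen_Ioo
  have hφd2 := c2_snd hφ2 isOpen_Ioo
  -- Step 2: choose ρ > 1 with μ < ρ^(γ-2) * μ'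
  have hρex : ∃ ρ : ℝ, 1 < ρ ∧ μ < ρ^(γ-2) * μ' := by
    have hcont : ContinuousAt (fun x : ℝ => x^(γ-2) * μ') 1 :=
      (Real.continuousAt_rpow_const 1 (γ-2) (Or.inl one_ne_zero)).mul continuousAt_const
    have h1 : (1:ℝ)^(γ-2) * μ' = μ' := by rw [Real.one_rpow, one_mul]
    have htend : Tendsto (fun x : ℝ => x^(γ-2) * μ') (𝓝 1) (𝓝 ((1:ℝ)^(γ-2) * μ')) :=
      hcont.tendsto
    rw [h1] at htend
    have hev : ∀ᶠ x in 𝓝[>] (1:ℝ), μ < x^(γ-2) * μ' :=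
      (htend.mono_left nhdsWithin_le_nhds).eventually (eventually_gt_nhds hμμ')
    obtain ⟨ρ, hρ⟩ := (hev.and self_mem_nhdsWithin).exists
    exact ⟨ρ, hρ.2, hρ.1⟩
  obtain ⟨ρ, hρ1, hμ2lt⟩ := hρex
  have hρpos : 0 < ρ := lt_trans one_pos hρ1
  have hρne : ρ ≠ 0 := ne_of_gt hρpos
  set μ₂ := ρ^(γ-2) * μ' with hμ₂def
  set μ₃ := (μ + μ₂)/2 with hμ₃def
  have hμ₃l : μ < μ₃ := by rw [hμ₃def]; linarith
  have hμ₃r : μ₃ < μ₂ := by rw [hμ₃def]; linarith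
  -- Step 3: the exponent α and constant cst
  set α := (lam*((N:ℝ)-1) - Lam)/(2*Lam) with hαdef
  set cst := (lam*((N:ℝ)-1) - Lam)/2 with hcstdef
  have hαpos : 0 < α := div_pos (by linarith) (by linarith)
  have hcstpos : 0 < cst := by rw [hcstdef]; linarith
  have hkey : Lam*(α+1) - lam*((N:ℝ)-1) = -cst := by
    rw [hαdef, hcstdef]; field_simp; ring
  -- Step 4: choose r₀ ∈ (0,1) with μ₃ * r₀^(2-γ) ≤ α*cst
  have hr₀ex : ∃ r₀ : ℝ, (0 < r₀ ∧ r₀ < 1) ∧ μ₃ * r₀^(2-γ) < α*cst := by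
    have hz : (fun r : ℝ => μ₃ * r^(2-γ)) 0 = 0 := by
      simp [Real.zero_rpow (by intro h; exact absurd h (by norm_num; linarith) : (2:ℝ)-γ ≠ 0)]
    have hcont : ContinuousAt (fun r : ℝ => μ₃ * r^(2-γ)) 0 :=
      continuousAt_const.mul (Real.continuousAt_rpow_const 0 (2-γ) (Or.inr (by linarith)))
    have htend : Tendsto (fun r : ℝ => μ₃ * r^(2-γ)) (𝓝 0) (𝓝 (μ₃ * (0:ℝ)^(2-γ))) :=
      hcont.tendsto
    rw [show μ₃ * (0:ℝ)^(2-γ) = 0 from hz] at htend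
    have hev : ∀ᶠ r in 𝓝[>] (0:ℝ), μ₃ * r^(2-γ) < α*cst :=
      (htend.mono_left nhdsWithin_le_nhds).eventually
        (eventually_lt_nhds (mul_pos hαpos hcstpos))
    have hev2 : Ioo (0:ℝ) 1 ∈ 𝓝[>] (0:ℝ) := Ioo_mem_nhdsGT_of_mem ⟨le_refl 0, one_pos⟩
    obtain ⟨r₀, h1, h2⟩ := (hev.and (eventually_mem_set.mpr hev2)).exists
    exact ⟨r₀, ⟨h2.1, h2.2⟩, h1⟩
  obtain ⟨r₀, ⟨hr₀0, hr₀1⟩, hr₀b⟩ := hr₀ex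
  -- Step 5: minimum of φ on the compact set [r₀/ρ, 1/ρ]
  have hsubset : Icc (r₀/ρ) (1/ρ) ⊆ Ioo 0 1 := by
    intro x hx
    constructor
    · exact lt_of_lt_of_le (div_pos hr₀0 hρpos) hx.1
    · exact lt_of_le_of_lt hx.2 (by rw [div_lt_one hρpos]; exact hρ1)
  have hIccne : (Icc (r₀/ρ) (1/ρ)).Nonempty := by
    rw [nonempty_Icc]
    exact (div_le_div_iff_of_pos_right hρpos).mpr hr₀1.le
  obtain ⟨mpt, hmpt, hminφ⟩ :=
    isCompact_Icc.exists_isMinOn hIccne ((hφ2.continuousOn).mono hsubset)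
  set δ₀ := φ mpt with hδ₀def
  have hδ₀pos : 0 < δ₀ := hφpos mpt (hsubset hmpt)
  set K := (μ₂ - μ₃)*δ₀ with hKdef
  have hKpos : 0 < K := mul_pos (by linarith) hδ₀pos
  set Cb := |μ₃| * r₀^(-α-γ) with hCbdef
  have hCb0 : 0 ≤ Cb := mul_nonneg (abs_nonneg _) (Real.rpow_pos_of_pos hr₀0 _).le
  set ε := K/(Cb+1) with hεdef
  have hεpos : 0 < ε := div_pos hKpos (by linarith)
  clear_value μ₂ μ₃ α cst δ₀ K Cb ε
  -- Step 6: the barrier Ψ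
  set Ψ : ℝ → ℝ := fun r => φ (r/ρ) + ε * r^(-α) with hΨdef
  set Ψ' : ℝ → ℝ := fun r => deriv φ (r/ρ) * (1/ρ) - ε*α*r^(-α-1) with hΨ'def
  set Ψ'' : ℝ → ℝ := fun r => deriv (deriv φ) (r/ρ) * (1/ρ) * (1/ρ) + ε*α*(α+1)*r^(-α-2)
    with hΨ''def
  have hmem : ∀ r ∈ Ioo (0:ℝ) ρ, r/ρ ∈ Ioo (0:ℝ) 1 := fun r hr =>
    ⟨div_pos hr.1 hρpos, (div_lt_one hρpos).mpr hr.2⟩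
  have hΨd1 : ∀ r ∈ Ioo (0:ℝ) ρ, HasDerivAt Ψ (Ψ' r) r := by
    intro r hr
    have h1 : HasDerivAt (fun x : ℝ => x/ρ) (1/ρ) r := (hasDerivAt_id r).div_const ρ
    have h3 : HasDerivAt (fun x : ℝ => φ (x/ρ)) (deriv φ (r/ρ) * (1/ρ)) r :=
      (hφd1 _ (hmem r hr)).comp r h1
    have h4 : HasDerivAt (fun x : ℝ => x^(-α)) (-α * r^(-α-1)) r :=
      Real.hasDerivAt_rpow_const (Or.inl (ne_of_gt hr.1))
    have := h3.add (h4.const_mul ε)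
    refine this.congr_deriv ?_
    simp only [hΨ'def]; ring
  have hΨd2 : ∀ r ∈ Ioo (0:ℝ) ρ, HasDerivAt Ψ' (Ψ'' r) r := by
    intro r hr
    have h1 : HasDerivAt (fun x : ℝ => x/ρ) (1/ρ) r := (hasDerivAt_id r).div_const ρ
    have h3 : HasDerivAt (fun x : ℝ => deriv φ (x/ρ) * (1/ρ))
        (deriv (deriv φ) (r/ρ) * (1/ρ) * (1/ρ)) r :=
      (((hφd2 _ (hmem r hr)).comp r h1)).mul_const (1/ρ)
    have h4 : HasDerivAt (fun x : ℝ => x^(-α-1)) ((-α-1) * r^(-α-1-1)) r :=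
      Real.hasDerivAt_rpow_const (Or.inl (ne_of_gt hr.1))
    have hee : -α-1-1 = -α-2 := by ring
    rw [hee] at h4
    have := h3.sub ((h4.const_mul (ε*α)))
    refine this.congr_deriv ?_
    simp only [hΨ''def]; ring
  have hΨpos : ∀ r ∈ Ioo (0:ℝ) ρ, 0 < Ψ r := by
    intro r hr
    have := hφpos _ (hmem r hr)
    have h2 : 0 < ε * r^(-α) := mul_pos hεpos (Real.rpow_pos_of_pos hr.1 _)
    simp only [hΨdef]; linarith
  have hΨlb : ∀ r ∈ Ioo (0:ℝ) ρ, ε * r^(-α) ≤ Ψ r := by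
    intro r hr
    have := hφpos _ (hmem r hr)
    simp only [hΨdef]; linarith
  have hΨcont : ContinuousOn Ψ (Ioo 0 ρ) := fun r hr =>
    ((hΨd1 r hr).differentiableAt.continuousAt).continuousWithinAt
  clear_value Ψ Ψ' Ψ''
  -- Step 7: Ψ is a supersolution with coefficient μ₃ on (0,1)
  have hΨineq : ∀ r ∈ Ioo (0:ℝ) 1, F (Dmat N (Ψ'' r) (Ψ' r / r)) + μ₃ * Ψ r * r^(-γ) ≤ 0 := by
    intro r hr
    obtain ⟨hr0, hr1⟩ := hr
    have hrne : r ≠ 0 := ne_of_gt hr0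
    have hrρ : r ∈ Ioo (0:ℝ) ρ := ⟨hr0, lt_trans hr1 hρ1⟩
    have hs : r/ρ ∈ Ioo (0:ℝ) 1 := hmem r hrρ
    set s := r/ρ with hsdef
    set A := deriv (deriv φ) s with hAdef
    set B := deriv φ s / s with hBdef
    set c₂ := (1/ρ)*(1/ρ) with hc₂def
    have hc₂pos : 0 < c₂ := mul_pos (by positivity) (by positivity)
    set S₁ := ε*α*(α+1)*r^(-α-2) with hS₁def
    set T₁ := -(ε*α*r^(-α-2)) with hT₁def
    have hX : 0 < r^(-α-2) := Real.rpow_pos_of_pos hr0 _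
    have hS₁0 : 0 ≤ S₁ := by positivity
    have hT₁0 : T₁ ≤ 0 := by
      rw [hT₁def]; simp only [neg_nonpos]; positivity
    clear_value s A B c₂ S₁ T₁
    -- exponent identities
    have e1 : r^(-α-1) = r^(-α-2)*r := by
      rw [show -α-1 = -α-2+1 by ring, Real.rpow_add_one hrne]
    have eP : (0:ℝ) < r^(-γ) := Real.rpow_pos_of_pos hr0 _
    have e3 : r^(-α) * r^(-γ) = r^(-α-2) * r^(2-γ) := by
      rw [← Real.rpow_add hr0, ← Real.rpow_add hr0]; congr 1; ring
    -- decompose the matrix entries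
    have hM : Ψ'' r = c₂*A + S₁ := by
      simp only [hΨ''def, hc₂def, hAdef, hS₁def, hsdef]; ring
    have hB2 : Ψ' r / r = c₂*B + T₁ := by
      simp only [hΨ'def, hc₂def, hBdef, hT₁def, hsdef, e1]
      field_simp
      ring
    -- step 1 : Pucci-type bound
    have step1 : F (Dmat N (Ψ'' r) (Ψ' r / r)) ≤
        F (Dmat N (c₂*A) (c₂*B)) + Lam*S₁ + lam*((N:ℝ)-1)*T₁ := by
      rw [hM, hB2]
      exact F_le_add hN1 hF1 (c₂*A) (c₂*B) S₁ T₁ hS₁0 hT₁0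
    -- step 2 : homogeneity
    have step2 : F (Dmat N (c₂*A) (c₂*B)) = c₂ * F (Dmat N A B) := F_smul hF3 hc₂pos A B
    -- step 3 : supersolution property of φ
    have step3 : F (Dmat N A B) ≤ -(μ' * φ s * s^(-γ)) := by
      have := hφineq s hs
      rw [← hAdef, ← hBdef] at this
      linarith
    -- step 4 : rescale
    have hsg : s^(-γ) = r^(-γ) * ρ^γ := by
      rw [hsdef, Real.div_rpow hr0.le hρpos.le, Real.rpow_neg hρpos.le γ]
      field_simp
    have hg2 : μ₂ = ρ^γ * c₂ * μ' := by
      rw [hμ₂def, hc₂def, show γ-2 = γ + (-1) + (-1) by ring, Real.rpow_add hρpos,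
        Real.rpow_add hρpos, Real.rpow_neg_one]
      field_simp
    have step4 : c₂ * F (Dmat N A B) ≤ -(μ₂ * φ s * r^(-γ)) := by
      have h := mul_le_mul_of_nonneg_left step3 hc₂pos.le
      calc c₂ * F (Dmat N A B) ≤ c₂ * -(μ' * φ s * s^(-γ)) := h
        _ = -(μ₂ * φ s * r^(-γ)) := by rw [hsg, hg2]; ring
    -- step 5 : the barrier term
    have step5 : Lam*S₁ + lam*((N:ℝ)-1)*T₁ = -(ε*α*cst*r^(-α-2)) := by
      rw [hS₁def, hT₁def]
      linear_combination (ε*α*r^(-α-2)) * hkey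
    -- put everything together
    have main : F (Dmat N (Ψ'' r) (Ψ' r / r)) + μ₃ * Ψ r * r^(-γ) ≤
        (μ₃ - μ₂) * φ s * r^(-γ) + ε * r^(-α-2) * (μ₃ * r^(2-γ) - α*cst) := by
      have hΨr : Ψ r = φ s + ε * r^(-α) := by simp only [hΨdef, hsdef]
      rw [hΨr]
      have expand : μ₃ * (φ s + ε * r^(-α)) * r^(-γ) =
          μ₃ * φ s * r^(-γ) + ε * μ₃ * (r^(-α) * r^(-γ)) := by ring
      rw [expand, e3]
      have e5 : F (Dmat N (c₂*A) (c₂*B)) + Lam*S₁ + lam*((N:ℝ)-1)*T₁ =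
          c₂ * F (Dmat N A B) + (Lam*S₁ + lam*((N:ℝ)-1)*T₁) := by rw [step2]; ring
      rw [e5, step5] at step1
      linarith only [step1, step4]
    -- show RHS ≤ 0 by cases on r vs r₀
    rcases le_or_gt r r₀ with hcase | hcase
    · -- r ≤ r₀ : barrier term dominates
      have h1 : (μ₃ - μ₂) * φ s * r^(-γ) ≤ 0 :=
        mul_nonpos_of_nonpos_of_nonneg
          (mul_nonpos_of_nonpos_of_nonneg (by linarith only [hμ₃r]) (hφpos s hs).le) eP.le
      have h2 : μ₃ * r^(2-γ) ≤ α*cst := by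
        rcases le_or_gt μ₃ 0 with hμ₃0 | hμ₃0
        · have q1 := mul_nonpos_of_nonpos_of_nonneg hμ₃0 (Real.rpow_pos_of_pos hr0 (2-γ)).le
          linarith only [q1, mul_pos hαpos hcstpos]
        · have hle : r^(2-γ) ≤ r₀^(2-γ) := Real.rpow_le_rpow hr0.le hcase (by linarith)
          have q2 := mul_le_mul_of_nonneg_left hle hμ₃0.le
          linarith only [q2, hr₀b]
      have h3 : ε * r^(-α-2) * (μ₃ * r^(2-γ) - α*cst) ≤ 0 := by
        apply mul_nonpos_of_nonneg_of_nonpos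
        · exact (mul_pos hεpos hX).le
        · linarith only [h2]
      linarith only [main, h1, h3]
    · -- r₀ < r : the μ₂ - μ₃ gap dominates
      have hsmem : s ∈ Icc (r₀/ρ) (1/ρ) := by
        constructor
        · rw [hsdef]; exact (div_le_div_iff_of_pos_right hρpos).mpr hcase.le
        · rw [hsdef]; exact (div_le_div_iff_of_pos_right hρpos).mpr hr1.le
      have hφs : δ₀ ≤ φ s := by rw [hδ₀def]; exact hminφ hsmem
      have hP1 : 1 ≤ r^(-γ) :=
        Real.one_le_rpow_of_pos_of_le_one_of_nonpos hr0 hr1.le (by linarith only [hγ0])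
      have h1 : (μ₃ - μ₂) * φ s * r^(-γ) ≤ -K := by
        rw [hKdef]
        have q1 : δ₀*1 ≤ φ s * r^(-γ) :=
          mul_le_mul hφs hP1 zero_le_one (le_trans hδ₀pos.le hφs)
        have q2 := mul_le_mul_of_nonneg_left q1 (by linarith only [hμ₃r] : (0:ℝ) ≤ μ₂ - μ₃)
        have q3 : (μ₂ - μ₃)*(δ₀*1) = (μ₂ - μ₃)*δ₀ := by ring
        have q4 : (μ₂ - μ₃)*(φ s * r^(-γ)) = -((μ₃ - μ₂) * φ s * r^(-γ)) := by ring
        rw [q3, q4] at q2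
        linarith only [q2]
      have hrexp : r^(-α-γ) ≤ r₀^(-α-γ) :=
        Real.rpow_le_rpow_of_nonpos hr₀0 hcase.le (by linarith only [hαpos, hγ0])
      have he4 : r^(-α-2) * r^(2-γ) = r^(-α-γ) := by
        rw [← Real.rpow_add hr0]; congr 1; ring
      have h2 : ε * r^(-α-2) * (μ₃ * r^(2-γ) - α*cst) ≤ ε * Cb := by
        have hq : ε * r^(-α-2) * (μ₃ * r^(2-γ) - α*cst) ≤ ε * (μ₃ * r^(-α-γ)) := by
          have hqq : ε * r^(-α-2) * (μ₃ * r^(2-γ) - α*cst) =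
              ε * (μ₃ * (r^(-α-2) * r^(2-γ))) - ε * (α*cst*r^(-α-2)) := by ring
          rw [hqq, he4]
          have q5 : 0 ≤ ε * (α*cst*r^(-α-2)) :=
            (mul_pos hεpos (mul_pos (mul_pos hαpos hcstpos) hX)).le
          linarith only [q5]
        have hq2 : μ₃ * r^(-α-γ) ≤ Cb := by
          rw [hCbdef]
          have h5 : (0:ℝ) < r^(-α-γ) := Real.rpow_pos_of_pos hr0 _
          have h6 : μ₃ ≤ |μ₃| := le_abs_self μ₃
          have q6 := mul_le_mul_of_nonneg_right h6 h5.le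
          have q7 := mul_le_mul_of_nonneg_left hrexp (abs_nonneg μ₃)
          linarith only [q6, q7]
        calc ε * r^(-α-2) * (μ₃ * r^(2-γ) - α*cst) ≤ ε * (μ₃ * r^(-α-γ)) := hq
          _ ≤ ε * Cb := mul_le_mul_of_nonneg_left hq2 hεpos.le
      have h3 : ε * Cb < K := by
        rw [hεdef, div_mul_eq_mul_div, div_lt_iff₀ (by linarith only [hCb0] : (0:ℝ) < Cb+1)]
        nlinarith only [hKpos, hCb0]
      linarith only [main, h1, h2, h3]
  -- Step 8: the contradiction argument
  have hsubρ : Ioo (0:ℝ) 1 ⊆ Ioo 0 ρ := fun x hx => ⟨hx.1, lt_trans hx.2 hρ1⟩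
  by_contra hcon
  push_neg at hcon
  obtain ⟨rs, hrs, hupos⟩ := hcon
  -- find an interior point where u is positive
  have hr₁ex : ∃ r₁ ∈ Ioo (0:ℝ) 1, 0 < u r₁ := by
    rcases eq_or_lt_of_le hrs.1 with h0 | h0
    · have hc : ContinuousWithinAt u (Ioo 0 1) rs :=
        (huc rs hrs).mono Ioo_subset_Icc_self
      have hev : ∀ᶠ x in 𝓝[Ioo (0:ℝ) 1] rs, 0 < u x :=
        hc.eventually (eventually_gt_nhds hupos)
      have hne : (𝓝[Ioo (0:ℝ) 1] rs).NeBot := by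
        apply mem_closure_iff_nhdsWithin_neBot.mp
        rw [closure_Ioo one_ne_zero.symm]
        rw [← h0]
        exact ⟨le_rfl, zero_le_one⟩
      obtain ⟨x, hx1, hx2⟩ := (hev.and self_mem_nhdsWithin).exists
      exact ⟨x, hx2, hx1⟩
    · rcases eq_or_lt_of_le hrs.2 with h1 | h1
      · exfalso; rw [h1] at hupos; linarith only [hupos, hbd]
      · exact ⟨rs, ⟨h0, h1⟩, hupos⟩
  obtain ⟨r₁, hr₁, hur₁⟩ := hr₁ex
  have hΨr₁pos : 0 < Ψ r₁ := hΨpos r₁ (hsubρ hr₁)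
  set c₁ := u r₁ / Ψ r₁ with hc₁def
  have hc₁pos : 0 < c₁ := div_pos hur₁ hΨr₁pos
  -- global bound on u
  obtain ⟨xM, hxM, hMmax⟩ := isCompact_Icc.exists_isMaxOn (nonempty_Icc.mpr zero_le_one) huc
  set M := max (u xM) 1 with hMdef
  have hMpos : 0 < M := lt_of_lt_of_le one_pos (le_max_right _ _)
  have hMb : ∀ r ∈ Icc (0:ℝ) 1, u r ≤ M := fun r hr => le_trans (hMmax hr) (le_max_left _ _)
  clear_value c₁ M
  -- choose δ
  have hδex : ∃ δ : ℝ, ((M/ε) * δ^α < c₁ ∧ (0 < δ ∧ δ < r₁)) := by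
    have hz : (M/ε) * (0:ℝ)^α = 0 := by
      rw [Real.zero_rpow (ne_of_gt hαpos), mul_zero]
    have hcont : ContinuousAt (fun d : ℝ => (M/ε) * d^α) 0 :=
      continuousAt_const.mul (Real.continuousAt_rpow_const 0 α (Or.inr hαpos.le))
    have htend : Tendsto (fun d : ℝ => (M/ε) * d^α) (𝓝 0) (𝓝 ((M/ε) * (0:ℝ)^α)) :=
      hcont.tendsto
    rw [hz] at htend
    have hev : ∀ᶠ d in 𝓝[>] (0:ℝ), (M/ε) * d^α < c₁ :=
      (htend.mono_left nhdsWithin_le_nhds).eventually (eventually_lt_nhds hc₁pos)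
    have hev2 : Ioo (0:ℝ) r₁ ∈ 𝓝[>] (0:ℝ) := Ioo_mem_nhdsGT_of_mem ⟨le_refl 0, hr₁.1⟩
    obtain ⟨δ, h1, h2⟩ := (hev.and (eventually_mem_set.mpr hev2)).exists
    exact ⟨δ, h1, h2.1, h2.2⟩
  obtain ⟨δ, hδb, hδ0, hδr₁⟩ := hδex
  -- maximize u/Ψ on [δ,1]
  have hsub1 : Icc δ 1 ⊆ Ioo (0:ℝ) ρ := fun x hx =>
    ⟨lt_of_lt_of_le hδ0 hx.1, lt_of_le_of_lt hx.2 hρ1⟩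
  have hhcont : ContinuousOn (fun r => u r / Ψ r) (Icc δ 1) :=
    (huc.mono (Icc_subset_Icc hδ0.le le_rfl)).div (hΨcont.mono hsub1)
      (fun x hx => ne_of_gt (hΨpos x (hsub1 hx)))
  obtain ⟨r₂, hr₂mem, hr₂max⟩ := isCompact_Icc.exists_isMaxOn
    (nonempty_Icc.mpr (le_trans hδr₁.le hr₁.2.le)) hhcont
  set c := u r₂ / Ψ r₂ with hcdef
  have hr₁mem : r₁ ∈ Icc δ 1 := ⟨hδr₁.le, hr₁.2.le⟩
  have hcc₁ : c₁ ≤ c := by rw [hcdef, hc₁def] at *; exact hr₂max hr₁mem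
  have hcpos : 0 < c := lt_of_lt_of_le hc₁pos hcc₁
  -- r₂ is interior
  have hr₂ne1 : r₂ ≠ 1 := by
    intro h
    have hΨ1pos : 0 < Ψ 1 := hΨpos 1 ⟨one_pos, hρ1⟩
    have : c ≤ 0 := by
      rw [hcdef, h]
      exact div_nonpos_of_nonpos_of_nonneg hbd hΨ1pos.le
    linarith only [this, hcpos]
  have hr₂Ioo : r₂ ∈ Ioo (0:ℝ) 1 :=
    ⟨lt_of_lt_of_le hδ0 hr₂mem.1, lt_of_le_of_ne hr₂mem.2 hr₂ne1⟩
  have hΨr₂pos : 0 < Ψ r₂ := hΨpos r₂ (hsubρ hr₂Ioo)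
  have heq : u r₂ = c * Ψ r₂ := by
    rw [hcdef, div_mul_cancel₀ (u r₂) (ne_of_gt hΨr₂pos)]
  clear_value c
  -- u ≤ c Ψ globally on (0,1)
  have hglob : ∀ r ∈ Ioo (0:ℝ) 1, u r ≤ c * Ψ r := by
    intro r hr
    have hΨrpos : 0 < Ψ r := hΨpos r (hsubρ hr)
    rcases le_or_gt δ r with hge | hlt
    · have h1 : u r / Ψ r ≤ u r₂ / Ψ r₂ := hr₂max ⟨hge, hr.2.le⟩
      rw [← hcdef] at h1
      exact (div_le_iff₀ hΨrpos).mp h1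
    · have h1 : u r ≤ M := hMb r (Ioo_subset_Icc_self hr)
      have h2 : ε * r^(-α) ≤ Ψ r := hΨlb r (hsubρ hr)
      have h3 : r^α ≤ δ^α := Real.rpow_le_rpow hr.1.le hlt.le hαpos.le
      have h4 : (M/ε) * r^α ≤ (M/ε) * δ^α :=
        mul_le_mul_of_nonneg_left h3 (div_nonneg hMpos.le hεpos.le)
      have hA1c : (M/ε) * r^α ≤ c := le_trans h4 (le_trans hδb.le hcc₁)
      have hxy : r^α * r^(-α) = 1 := by
        rw [← Real.rpow_add hr.1]; simp
      have hid : (M/ε) * r^α * (ε * r^(-α)) = M := by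
        have hq : (M/ε) * r^α * (ε * r^(-α)) = (M/ε*ε) * (r^α * r^(-α)) := by ring
        rw [hq, div_mul_cancel₀ M (ne_of_gt hεpos), hxy, mul_one]
      have hA1pos : 0 ≤ (M/ε) * r^α :=
        mul_nonneg (div_nonneg hMpos.le hεpos.le) (Real.rpow_pos_of_pos hr.1 α).le
      have hfin : (M/ε) * r^α * (ε * r^(-α)) ≤ c * Ψ r :=
        mul_le_mul hA1c h2 (mul_pos hεpos (Real.rpow_pos_of_pos hr.1 _)).le hcpos.le
      rw [hid] at hfin
      linarith only [h1, hfin]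
  -- derivatives of u
  have hud1 := c2_fst hu2 isOpen_Ioo
  have hud2 := c2_snd hu2 isOpen_Ioo
  set g : ℝ → ℝ := fun r => u r - c * Ψ r with hgdef
  have hgd : ∀ r ∈ Ioo (0:ℝ) 1, HasDerivAt g (deriv u r - c * Ψ' r) r := fun r hr =>
    (hud1 r hr).sub ((hΨd1 r (hsubρ hr)).const_mul c)
  have hgderiv : ∀ r ∈ Ioo (0:ℝ) 1, deriv g r = deriv u r - c * Ψ' r := fun r hr =>
    (hgd r hr).deriv
  have hgmax : ∀ y ∈ Ioo (0:ℝ) 1, g y ≤ g r₂ := by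
    intro y hy
    have h1 := hglob y hy
    simp only [hgdef]
    rw [heq]
    linarith only [h1]
  have hL : HasDerivAt (deriv g) (deriv (deriv u) r₂ - c * Ψ'' r₂) r₂ := by
    have hexp : HasDerivAt (fun r => deriv u r - c * Ψ' r)
        (deriv (deriv u) r₂ - c * Ψ'' r₂) r₂ :=
      (hud2 r₂ hr₂Ioo).sub ((hΨd2 r₂ (hsubρ hr₂Ioo)).const_mul c)
    apply hexp.congr_of_eventuallyEq
    exact Filter.eventuallyEq_of_mem (isOpen_Ioo.mem_nhds hr₂Ioo) hgderiv
  have hL0 : deriv (deriv u) r₂ - c * Ψ'' r₂ ≤ 0 :=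
    secondDerivTest hr₂Ioo (fun y hy => (hgd y hy).differentiableAt) hgmax hL
  have hlmax : IsLocalMax g r₂ :=
    Filter.eventually_of_mem (isOpen_Ioo.mem_nhds hr₂Ioo) hgmax
  have hfirst : deriv u r₂ = c * Ψ' r₂ := by
    have h1 := hlmax.deriv_eq_zero
    have h2 := hgderiv r₂ hr₂Ioo
    rw [h1] at h2
    linarith only [h2]
  -- the final chain of inequalities at r₂
  have hchain1 : F (Dmat N (deriv (deriv u) r₂) (deriv u r₂ / r₂)) ≤
      F (Dmat N (c * Ψ'' r₂) (deriv u r₂ / r₂)) := by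
    have h1 := F_lower_a hN1 hF1 (deriv (deriv u) r₂) (deriv u r₂ / r₂)
      (-(deriv (deriv u) r₂ - c * Ψ'' r₂)) (neg_nonneg.mpr hL0)
    have h2 : deriv (deriv u) r₂ + -(deriv (deriv u) r₂ - c * Ψ'' r₂) = c * Ψ'' r₂ := by ring
    rw [h2] at h1
    have h3 : 0 ≤ lam * -(deriv (deriv u) r₂ - c * Ψ'' r₂) :=
      mul_nonneg hlam.le (neg_nonneg.mpr hL0)
    linarith only [h1, h3]
  have hchain2 : F (Dmat N (c * Ψ'' r₂) (deriv u r₂ / r₂)) =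
      c * F (Dmat N (Ψ'' r₂) (Ψ' r₂ / r₂)) := by
    have harg : deriv u r₂ / r₂ = c * (Ψ' r₂ / r₂) := by rw [hfirst]; ring
    rw [harg]
    exact F_smul hF3 hcpos _ _
  have hchain3 : F (Dmat N (Ψ'' r₂) (Ψ' r₂ / r₂)) ≤ -(μ₃ * Ψ r₂ * r₂^(-γ)) := by
    have := hΨineq r₂ hr₂Ioo
    linarith only [this]
  have hchain4 : c * F (Dmat N (Ψ'' r₂) (Ψ' r₂ / r₂)) ≤ c * -(μ₃ * Ψ r₂ * r₂^(-γ)) :=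
    mul_le_mul_of_nonneg_left hchain3 hcpos.le
  have hu_ineq := hineq r₂ hr₂Ioo
  rw [heq] at hu_ineq
  have hPP : 0 < r₂^(-γ) := Real.rpow_pos_of_pos hr₂Ioo.1 _
  have hfact : 0 < c * Ψ r₂ * r₂^(-γ) := mul_pos (mul_pos hcpos hΨr₂pos) hPP
  have hneg : c * Ψ r₂ * r₂^(-γ) * (μ - μ₃) < 0 :=
    mul_neg_of_pos_of_neg hfact (by linarith only [hμ₃l])
  have hcontr : 0 ≤ c * Ψ r₂ * r₂^(-γ) * (μ - μ₃) := by
    nlinarith only [hu_ineq, hchain1, hchain2, hchain4]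
  linarith only [hneg, hcontr]

end
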